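/- For every colored multigraph G, every d ∈ ℕ∞, every d-substitution ρ on G, and every node v ∈ G, we have colr^d(G)(v) = colr^d(G/ρ)(ρ(v)). -/

import Mathlib

open Classical

/-- The multiset of incoming neighbors of `v` in the multigraph with edge
multiplicity function `E` (with `E w v` the multiplicity of edge `w → v`). -/
def inc {V : Type*} [Fintype V] (E : V → V → ℕ) (v : V) : Multiset V :=
  Finset.univ.val.bind fun w => Multiset.replicate (E w v) w

/-- Cap all multiplicities of a multiset at `c ∈ ℕ∞`. -/
noncomputable def capM {α : Type*} (c : ℕ∞) (M : Multiset α) : Multiset α :=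
  letI := Classical.decEq α
  M.toFinset.val.bind fun x => Multiset.replicate ((min (M.count x : ℕ∞) c).toNat) x

/-- The type of colors obtained after `d` steps of color refinement, starting
from base colors in `Y`: a depth-`d` color is the previous color paired with the
multiset of previous colors of the incoming neighbors. -/
def CRt (Y : Type*) : ℕ → Type _
  | 0 => Y
  | (d+1) => CRt Y d × Multiset (CRt Y d)

/-- `d` steps of color refinement, starting from base coloring `g`. -/
def colr {V : Type*} [Fintype V] {Y : Type*} (E : V → V → ℕ) (g : V → Y) :
    (d : ℕ) → V → CRt Y d
  | 0 => g
  | (d+1) => fun v => (colr E g d v, (inc E v).map (colr E g d))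

/-- `d` steps of `c`-graded color refinement. -/
noncomputable def colrC {V : Type*} [Fintype V] {Y : Type*} (c : ℕ∞) (E : V → V → ℕ)
    (g : V → Y) : (d : ℕ) → V → CRt Y d
  | 0 => g
  | (d+1) => fun v => (colrC c E g d v, capM c ((inc E v).map (colrC c E g d)))

/-- The partition induced by `d` refinement steps is stable at `d`. -/
def stableAt {V : Type*} [Fintype V] {Y : Type*} (E : V → V → ℕ) (g : V → Y) (d : ℕ) : Prop :=
  ∀ v w : V, colr E g d v = colr E g d w ↔ colr E g (d+1) v = colr E g (d+1) w

/-- The stable coloring number: least depth at which color refinement stabilizes. -/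
noncomputable def stableNum {V : Type*} [Fintype V] {Y : Type*} (E : V → V → ℕ) (g : V → Y) : ℕ :=
  sInf { d | stableAt E g d }

/-- The stable coloring `colr^∞`. -/
noncomputable def colrInf {V : Type*} [Fintype V] {Y : Type*} (E : V → V → ℕ) (g : V → Y) :
    V → CRt Y (stableNum E g) :=
  colr E g (stableNum E g)

/-- The depth (number of refinement rounds) corresponding to `d ∈ ℕ∞`:
for `d = ∞` it is the stable coloring number of the graph. -/
noncomputable def edepth {V : Type*} [Fintype V] {Y : Type*} (E : V → V → ℕ) (g : V → Y)
    (d : ℕ∞) : ℕ :=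
  d.untopD (stableNum E g)

/-- Color refinement with depth `d ∈ ℕ∞` (stable coloring for `d = ∞`). -/
noncomputable def colrE' {V : Type*} [Fintype V] {Y : Type*} (E : V → V → ℕ) (g : V → Y)
    (d : ℕ∞) : V → CRt Y (edepth E g d) :=
  colr E g (edepth E g d)

/-- A substitution choosing one representative per class of the coloring `col`:
`ρ v` is in the class of `v`, and `ρ` is constant on classes. -/
def IsSubstWith {V : Type*} {C : Type*} (col : V → C) (ρ : V → V) : Prop :=
  (∀ v, col (ρ v) = col v) ∧ ∀ v w, col v = col w → ρ v = ρ w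

/-- Node set of the reduction: the chosen representatives. -/
def RNodes {V : Type*} (ρ : V → V) : Type _ := { v : V // ∃ u, ρ u = v }

noncomputable instance {V : Type*} [Fintype V] (ρ : V → V) : Fintype (RNodes ρ) := by
  unfold RNodes; exact Subtype.fintype _

instance {V : Type*} [DecidableEq V] (ρ : V → V) : DecidableEq (RNodes ρ) := by
  unfold RNodes; infer_instance

/-- Edge multiplicities of the reduction: `E'(v → w) = Σ_{v' ∈ [v]} E(v' → w)`. -/
noncomputable def reductE {V : Type*} [Fintype V] {C : Type*} (E : V → V → ℕ) (col : V → C)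
    (ρ : V → V) (a b : RNodes ρ) : ℕ :=
  ∑ v' ∈ Finset.univ.filter (fun v' => col v' = col a.val), E v' b.val

/-- Edge multiplicities of the `c`-graded reduction:
`E'(v → w) = min(Σ_{v' ∈ [v]} min(E(v' → w), c), c)`. -/
noncomputable def reductEC {V : Type*} [Fintype V] {C : Type*} (c : ℕ∞) (E : V → V → ℕ)
    (col : V → C) (ρ : V → V) (a b : RNodes ρ) : ℕ :=
  (min (↑(∑ v' ∈ Finset.univ.filter (fun v' => col v' = col a.val),
      (min (E v' b.val : ℕ∞) c).toNat) : ℕ∞) c).toNat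

/-- Coloring of the reduction: colors are inherited. -/
def reductG {V : Type*} {Y : Type*} (g : V → Y) (ρ : V → V) (a : RNodes ρ) : Y := g a.val

/-- A GNN layer of input dimension `p` and output dimension `q`. -/
structure GNNLayer (p q : ℕ) where
  h : ℕ
  agg : Multiset (Fin p → ℝ) → (Fin h → ℝ)
  comb : (Fin p → ℝ) → (Fin h → ℝ) → (Fin q → ℝ)

/-- The feature map transformer computed by a GNN layer. -/
def GNNLayer.apply {p q : ℕ} (L : GNNLayer p q) {V : Type*} [Fintype V]
    (E : V → V → ℕ) (g : V → Fin p → ℝ) : V → Fin q → ℝ :=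
  fun v => L.comb (g v) (L.agg ((inc E v).map g))

/-- A GNN: a nonempty sequence of layers with matching dimensions. -/
inductive GNN : ℕ → ℕ → Type
  | single : ∀ {p q}, GNNLayer p q → GNN p q
  | cons : ∀ {p r q}, GNNLayer p r → GNN r q → GNN p q

/-- Number of layers of a GNN. -/
def GNN.depth : ∀ {p q}, GNN p q → ℕ
  | _, _, .single _ => 1
  | _, _, .cons _ rest => rest.depth + 1

/-- The feature map transformer computed by a GNN. -/
def GNN.apply {V : Type*} [Fintype V] : ∀ {p q}, GNN p q → (V → V → ℕ) →
    (V → Fin p → ℝ) → V → Fin q → ℝ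
  | _, _, .single L, E, g => L.apply E g
  | _, _, .cons L rest, E, g => rest.apply E (L.apply E g)

/-- A GNN layer has width `c` if its aggregation only depends on multiplicities up to `c`. -/
def GNNLayer.HasWidth {p q : ℕ} (c : ℕ∞) (L : GNNLayer p q) : Prop :=
  ∀ M, L.agg M = L.agg (capM c M)

/-- A GNN has width `c` if all its layers do. -/
def GNN.HasWidth (c : ℕ∞) : ∀ {p q}, GNN p q → Prop
  | _, _, .single L => L.HasWidth c
  | _, _, .cons L rest => L.HasWidth c ∧ rest.HasWidth c


section AuxLemmas
set_option linter.unusedSectionVars false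
variable {V Y : Type*} [Fintype V] [DecidableEq V] (E : V → V → ℕ) (g : V → Y)

lemma colr_mono {m k : ℕ} (h : m ≤ k) {v w : V}
    (hc : colr E g k v = colr E g k w) : colr E g m v = colr E g m w := by
  induction k with
  | zero => obtain rfl := Nat.le_zero.mp h; exact hc
  | succ k ih =>
    rcases Nat.lt_or_ge m (k+1) with h' | h'
    · exact ih (by omega) (congrArg Prod.fst hc)
    · obtain rfl : m = k+1 := le_antisymm h h'
      exact hc

lemma count_inc_map {k : ℕ} (c : V → CRt Y k) (u : V) (x : CRt Y k) :
    Multiset.count x ((inc E u).map c) = ∑ w : V, if c w = x then E w u else 0 := by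
  classical
  rw [inc, Multiset.map_bind, Multiset.count_bind]
  rw [Finset.sum]
  congr 1
  apply Multiset.map_congr rfl
  intro w _
  rw [Multiset.map_replicate, Multiset.count_replicate]

lemma colr_reduct_aux (D : ℕ) (ρ : V → V)
    (h1 : ∀ w, colr E g D (ρ w) = colr E g D w)
    (h2 : ∀ v w, colr E g D v = colr E g D w → ρ v = ρ w) :
    ∀ k, k ≤ D + 1 → (∀ w, colr E g k (ρ w) = colr E g k w) →
      ∀ v, colr E g k v = colr (reductE E (colr E g D) ρ) (reductG g ρ) k
        (⟨ρ v, v, rfl⟩ : RNodes ρ) := by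
  classical
  have hidem : ∀ u, ρ (ρ u) = ρ u := fun u => h2 _ _ (h1 u)
  have hval : ∀ a : RNodes ρ, ρ a.val = a.val := by
    rintro ⟨x, u, rfl⟩; exact hidem u
  have hphi : ∀ a : RNodes ρ, (⟨ρ a.val, a.val, rfl⟩ : RNodes ρ) = a := by
    intro a; exact Subtype.ext (hval a)
  intro k
  induction k with
  | zero => intro _ H v; exact (H v).symm
  | succ k ih =>
    intro hk H v
    have Hk : ∀ w, colr E g k (ρ w) = colr E g k w := fun w => congrArg Prod.fst (H w)
    have ihk := ih (by omega) Hk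
    have hpair : colr E g (k+1) v = (colr E g k v, (inc E v).map (colr E g k)) := rfl
    have hpair' : colr (reductE E (colr E g D) ρ) (reductG g ρ) (k+1)
        (⟨ρ v, v, rfl⟩ : RNodes ρ) =
        (colr (reductE E (colr E g D) ρ) (reductG g ρ) k (⟨ρ v, v, rfl⟩ : RNodes ρ),
         (inc (reductE E (colr E g D) ρ) (⟨ρ v, v, rfl⟩ : RNodes ρ)).map
           (colr (reductE E (colr E g D) ρ) (reductG g ρ) k)) := rfl
    rw [hpair, hpair']
    refine Prod.ext (ihk v) ?_
    -- multiset part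
    have step1 : (inc E v).map (colr E g k) = (inc E (ρ v)).map (colr E g k) :=
      (congrArg Prod.snd (H v)).symm
    rw [step1]
    ext x
    show Multiset.count x ((inc E (ρ v)).map (colr E g k)) = Multiset.count x ((inc (reductE E (colr E g D) ρ) (⟨ρ v, v, rfl⟩ : RNodes ρ)).map (colr (reductE E (colr E g D) ρ) (reductG g ρ) k))
    rw [count_inc_map]; erw [count_inc_map (reductE E (colr E g D) ρ)]
    -- RHS: sum over RNodes
    have hEq : ∀ a : RNodes ρ,
        (if colr (reductE E (colr E g D) ρ) (reductG g ρ) k a = x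
          then reductE E (colr E g D) ρ a (⟨ρ v, v, rfl⟩ : RNodes ρ) else 0)
        = ∑ w ∈ Finset.univ.filter
            (fun w => (⟨ρ w, w, rfl⟩ : RNodes ρ) = a),
            (if colr E g k w = x then E w (ρ v) else 0) := by
      intro a
      have hca : colr (reductE E (colr E g D) ρ) (reductG g ρ) k a
          = colr E g k a.val := by
        conv_lhs => rw [← hphi a]
        exact (ihk a.val).symm
      have hfil : Finset.univ.filter (fun w => (⟨ρ w, w, rfl⟩ : RNodes ρ) = a)
          = Finset.univ.filter (fun w => colr E g D w = colr E g D a.val) := by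
        apply Finset.filter_congr
        intro w _
        constructor
        · intro hw
          have : ρ w = a.val := congrArg Subtype.val hw
          rw [← this, h1]
        · intro hw
          apply Subtype.ext
          show ρ w = a.val
          rw [h2 w a.val hw, hval a]
      rw [hfil, hca]
      have hred : reductE E (colr E g D) ρ a (⟨ρ v, v, rfl⟩ : RNodes ρ)
          = ∑ w ∈ Finset.univ.filter (fun w => colr E g D w = colr E g D a.val),
              E w (ρ v) := rfl
      by_cases hx : colr E g k a.val = x
      · rw [if_pos hx, hred]
        apply Finset.sum_congr rfl
        intro w hw
        have hcol : colr E g D w = colr E g D a.val := (Finset.mem_filter.mp hw).2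
        have : colr E g k w = colr E g k a.val := colr_mono E g (by omega) hcol
        rw [if_pos (this.trans hx)]
      · rw [if_neg hx]
        symm
        apply Finset.sum_eq_zero
        intro w hw
        have hcol : colr E g D w = colr E g D a.val := (Finset.mem_filter.mp hw).2
        have : colr E g k w = colr E g k a.val := colr_mono E g (by omega) hcol
        rw [if_neg (fun hc => hx (this.symm.trans hc))]
    calc (∑ w : V, if colr E g k w = x then E w (ρ v) else 0)
        = ∑ a : RNodes ρ, ∑ w ∈ Finset.univ.filter
            (fun w => (⟨ρ w, w, rfl⟩ : RNodes ρ) = a),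
            (if colr E g k w = x then E w (ρ v) else 0) :=
          by symm; convert Finset.sum_fiberwise_of_maps_to (κ := RNodes ρ) (s := Finset.univ) (g := fun w => (⟨ρ w, w, rfl⟩ : RNodes ρ)) (fun w _ => Finset.mem_univ _) (fun w => if colr E g k w = x then E w (ρ v) else 0) <;> exact Iff.rfl
    _ = ∑ a : RNodes ρ,
        (if colr (reductE E (colr E g D) ρ) (reductG g ρ) k a = x
          then reductE E (colr E g D) ρ a (⟨ρ v, v, rfl⟩ : RNodes ρ) else 0) := by
        apply Finset.sum_congr rfl
        intro a _
        rw [hEq a]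


lemma exists_stableAt : ∃ k, stableAt E g k := by
  classical
  by_contra h
  push_neg at h
  set n : ℕ → ℕ := fun k => (Set.range (colr E g k)).ncard with hn
  have himg : ∀ k, Set.range (colr E g k) =
      (fun x : CRt Y (k+1) => x.1) '' Set.range (colr E g (k+1)) := by
    intro k
    rw [← Set.range_comp]
    rfl
  have hlt : ∀ k, n k < n (k+1) := by
    intro k
    have hle : n k ≤ n (k+1) := by
      rw [hn]; simp only; rw [himg k]
      exact Set.ncard_image_le (Set.finite_range _)
    rcases lt_or_eq_of_le hle with h' | h'
    · exact h'
    · exfalso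
      apply h k
      have hinj : Set.InjOn (fun x : CRt Y (k+1) => x.1) (Set.range (colr E g (k+1))) := by
        apply Set.injOn_of_ncard_image_eq _ (Set.finite_range _)
        rw [hn] at h'; simp only at h'; rw [himg k] at h'
        exact h'
      intro v w
      constructor
      · intro hvw
        exact hinj (Set.mem_range_self v) (Set.mem_range_self w) hvw
      · intro hvw
        exact congrArg Prod.fst hvw
  have hsm : StrictMono n := strictMono_nat_of_lt_succ hlt
  have h1 : Fintype.card V + 1 ≤ n (Fintype.card V + 1) := hsm.le_apply
  have h2 : n (Fintype.card V + 1) ≤ Fintype.card V := by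
    have : Set.range (colr E g (Fintype.card V + 1)) = colr E g (Fintype.card V + 1) '' Set.univ := by
      rw [Set.image_univ]
    calc n (Fintype.card V + 1) = (Set.range (colr E g (Fintype.card V + 1))).ncard := rfl
    _ ≤ (Set.univ : Set V).ncard := by
        rw [this]; exact Set.ncard_image_le Set.finite_univ
    _ = Fintype.card V := by rw [Set.ncard_univ, Nat.card_eq_fintype_card]
  omega


lemma rnodes_eta (ρ : V → V) (hidem : ∀ u, ρ (ρ u) = ρ u) (a : RNodes ρ) :
    (⟨ρ a.val, a.val, rfl⟩ : RNodes ρ) = a := by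
  obtain ⟨x, u, rfl⟩ := a
  exact Subtype.ext (hidem u)

end AuxLemmas

/-- `colr^d(G)(v) = colr^d(G/ρ)(ρ(v))` for every `d ∈ ℕ∞` and
`d`-substitution `ρ` (`HEq` since for `d = ∞` the two stable colorings live at
the respective stable coloring numbers). -/
theorem colr_reduct_eq {V Y : Type*} [Fintype V] [DecidableEq V] (E : V → V → ℕ)
    (g : V → Y) (d : ℕ∞) (ρ : V → V) (hρ : IsSubstWith (colrE' E g d) ρ) (v : V) :
    HEq (colrE' E g d v)
      (colrE' (reductE E (colrE' E g d) ρ) (reductG g ρ) d (⟨ρ v, v, rfl⟩ : RNodes ρ)) := by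
  classical
  revert hρ
  induction d using ENat.recTopCoe with
  | top =>
    intro hρ
    simp only [colrE', edepth, WithTop.untopD_top] at hρ ⊢
    obtain ⟨h1, h2⟩ := hρ
    have h1 : ∀ w, colr E g (stableNum E g) (ρ w) = colr E g (stableNum E g) w := h1
    have h2 : ∀ v w, colr E g (stableNum E g) v = colr E g (stableNum E g) w → ρ v = ρ w := h2
    have hidem : ∀ u, ρ (ρ u) = ρ u := fun u => h2 _ _ (h1 u)
    have hD : stableAt E g (stableNum E g) := Nat.sInf_mem (exists_stableAt E g)
    have HD1 : ∀ w, colr E g (stableNum E g + 1) (ρ w) = colr E g (stableNum E g + 1) w :=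
      fun w => (hD (ρ w) w).mp (h1 w)
    have h1k : ∀ j, j ≤ stableNum E g → ∀ w, colr E g j (ρ w) = colr E g j w :=
      fun j hj w => colr_mono E g hj (h1 w)
    set D := stableNum E g with hDdef
    set E' := reductE E (colr E g D) ρ with hE'
    set g' := reductG g ρ with hg'
    have aux : ∀ k, k ≤ D + 1 → (∀ w, colr E g k (ρ w) = colr E g k w) →
        ∀ u, colr E g k u = colr E' g' k (⟨ρ u, u, rfl⟩ : RNodes ρ) :=
      colr_reduct_aux E g D ρ h1 h2
    have tD : ∀ a : RNodes ρ, colr E' g' D a = colr E g D a.val := by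
      intro a
      conv_lhs => rw [← rnodes_eta ρ hidem a]
      exact (aux D (by omega) h1 a.val).symm
    have tD1 : ∀ a : RNodes ρ, colr E' g' (D+1) a = colr E g (D+1) a.val := by
      intro a
      conv_lhs => rw [← rnodes_eta ρ hidem a]
      exact (aux (D+1) (le_refl _) HD1 a.val).symm
    have hstab' : stableAt E' g' D := by
      intro a b
      rw [tD a, tD b, tD1 a, tD1 b]
      exact hD a.val b.val
    have hnot : ∀ k, k < D → ¬ stableAt E' g' k := by
      intro k hk hS'
      have hnS : ¬ stableAt E g k := Nat.notMem_of_lt_sInf hk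
      apply hnS
      intro v' w'
      have tk : ∀ u : V, colr E' g' k (⟨ρ u, u, rfl⟩ : RNodes ρ) = colr E g k u :=
        fun u => (aux k (by omega) (h1k k (by omega)) u).symm
      have tk1 : ∀ u : V, colr E' g' (k+1) (⟨ρ u, u, rfl⟩ : RNodes ρ) = colr E g (k+1) u :=
        fun u => (aux (k+1) (by omega) (h1k (k+1) (by omega)) u).symm
      constructor
      · intro hvw
        have := (hS' (⟨ρ v', v', rfl⟩ : RNodes ρ) (⟨ρ w', w', rfl⟩ : RNodes ρ)).mp
          (by rw [tk v', tk w']; exact hvw)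
        rw [tk1 v', tk1 w'] at this
        exact this
      · intro hvw
        exact colr_mono E g (by omega) hvw
    have hD' : stableNum E' g' = D := by
      have hmemD : D ∈ {d | stableAt E' g' d} := hstab'
      apply le_antisymm
      · exact Nat.sInf_le hmemD
      · by_contra hc
        push_neg at hc
        have hmem : stableAt E' g' (stableNum E' g') := Nat.sInf_mem ⟨D, hmemD⟩
        exact hnot _ hc hmem
    have key : colr E g D v = colr E' g' D (⟨ρ v, v, rfl⟩ : RNodes ρ) :=
      aux D (by omega) h1 v
    show HEq (colr E g D v) (colr E' g' (stableNum E' g') (⟨ρ v, v, rfl⟩ : RNodes ρ))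
    have htr : ∀ (m : ℕ), m = D →
        HEq (colr E g D v) (colr E' g' m (⟨ρ v, v, rfl⟩ : RNodes ρ)) := by
      rintro m rfl
      exact heq_of_eq key
    exact htr _ hD'
  | coe n =>
    intro hρ
    simp only [colrE', edepth, untopD_coe_enat] at hρ ⊢
    obtain ⟨h1, h2⟩ := hρ
    have h1 : ∀ w, colr E g n (ρ w) = colr E g n w := h1
    have h2 : ∀ v w, colr E g n v = colr E g n w → ρ v = ρ w := h2
    exact heq_of_eq (colr_reduct_aux E g n ρ h1 h2 n (by omega) h1 v)
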